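/- Let X be a compact Hausdorff space with uniformity 𝒰 and f : X → X continuous. Then (X,f) has second weak shadowing: for every entourage E ∈ 𝒰 there exists D ∈ 𝒰 such that for every D-pseudo-orbit (x_i)_{i≥0} there exists z ∈ X with Orb(z) ⊆ B_E({x_i : i ≥ 0}). -/

import Mathlib

open UniformSpace Set
open scoped Uniformity
open scoped SetRel

private lemma track_lemma {X : Type*} [UniformSpace X] [CompactSpace X]
    (f : X → X) (hf : Continuous f) :
    ∀ (K : ℕ) (V : Set (X × X)), V ∈ uniformity X →
      ∃ D ∈ uniformity X, D ⊆ V ∧ ∀ x : ℕ → X, (∀ i, (f (x i), x (i + 1)) ∈ D) →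
        ∀ k ≤ K, ∀ i, (f^[k] (x i), x (i + k)) ∈ V := by
  intro K
  induction K with
  | zero =>
    intro V hV
    refine ⟨V, hV, subset_rfl, fun x hx k hk i => ?_⟩
    interval_cases k
    simpa using refl_mem_uniformity hV
  | succ K ih =>
    intro V hV
    obtain ⟨H, hH, hHcomp⟩ := comp_mem_uniformity_sets hV
    have hU : (Prod.map f f) ⁻¹' H ∈ uniformity X :=
      (CompactSpace.uniformContinuous_of_continuous hf) hH
    have hV' : ((Prod.map f f) ⁻¹' H) ∩ H ∩ V ∈ uniformity X :=
      Filter.inter_mem (Filter.inter_mem hU hH) hV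
    obtain ⟨D, hD, hDV', htrack⟩ := ih _ hV'
    refine ⟨D, hD, hDV'.trans (fun p hp => hp.2), fun x hx k hk i => ?_⟩
    rcases Nat.lt_or_ge k (K + 1) with hk' | hk'
    · exact (htrack x hx k (Nat.lt_succ_iff.mp hk') i).2
    · have hkK : k = K + 1 := le_antisymm hk hk'
      subst hkK
      have h1 := htrack x hx K le_rfl i
      have h2 : (f (f^[K] (x i)), f (x (i + K))) ∈ H := h1.1.1
      have h3 : (f (x (i + K)), x (i + K + 1)) ∈ H := (hDV' (hx (i + K))).1.2
      have h2' : (f^[K + 1] (x i), f (x (i + K))) ∈ H := by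
        rw [Function.iterate_succ_apply']; exact h2
      have h4 : (f^[K + 1] (x i), x (i + K + 1)) ∈ SetRel.comp H H := ⟨f (x (i + K)), h2', h3⟩
      have := hHcomp h4
      exact this

theorem second_weak_shadowing_uniform {X : Type*} [UniformSpace X] [CompactSpace X] [T2Space X]
    (f : X → X) (hf : Continuous f) (E : Set (X × X)) (hE : E ∈ uniformity X) :
    ∃ D ∈ uniformity X, ∀ x : ℕ → X, (∀ i, (f (x i), x (i + 1)) ∈ D) →
      ∃ z : X, ∀ k : ℕ, ∃ i : ℕ, (x i, f^[k] z) ∈ E := by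
  classical
  -- W symmetric with W ○ W ○ W ○ W ⊆ E
  obtain ⟨W₁, hW₁, hW₁symm, hW₁comp⟩ := comp_symm_mem_uniformity_sets hE
  obtain ⟨W, hW, hWsymm, hWcomp⟩ := comp_symm_mem_uniformity_sets hW₁
  have hW4 : W ○ W ○ (W ○ W) ⊆ E := by
    calc W ○ W ○ (W ○ W) ⊆ W₁ ○ W₁ := SetRel.comp_subset_comp hWcomp hWcomp
      _ ⊆ E := hW₁comp
  -- open entourage inside W
  obtain ⟨Wo, hWo', hWoW⟩ := (uniformity_hasBasis_open.mem_iff.mp hW)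
  obtain ⟨hWo, hWoOpen⟩ := hWo'
  -- finite cover by Wo-balls
  have hcover : univ ⊆ ⋃ c : X, ball c Wo := fun y _ =>
    mem_iUnion.mpr ⟨y, refl_mem_uniformity hWo⟩
  obtain ⟨t, ht⟩ := isCompact_univ.elim_finite_subcover (fun c : X => ball c Wo)
    (fun c => isOpen_ball c hWoOpen) hcover
  -- for each finite S, closed set M S
  set M : Finset X → Set X := fun S => closure (⋃ c ∈ S, ball c (W ○ W)) with hM
  -- a uniform escape bound for bad S
  have hbound : ∀ S : Finset X, ∃ KS : ℕ,
      (¬ ∃ z : X, ∀ k : ℕ, f^[k] z ∈ M S) → ∀ y : X, ∃ k ≤ KS, f^[k] y ∉ M S := by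
    intro S
    by_cases hgood : ∃ z : X, ∀ k : ℕ, f^[k] z ∈ M S
    · exact ⟨0, fun h => absurd hgood h⟩
    · push_neg at hgood
      have hcov : univ ⊆ ⋃ k : ℕ, f^[k] ⁻¹' (M S)ᶜ := by
        intro y _
        obtain ⟨k, hk⟩ := hgood y
        exact mem_iUnion.mpr ⟨k, hk⟩
      obtain ⟨u, hu⟩ := isCompact_univ.elim_finite_subcover
        (fun k : ℕ => f^[k] ⁻¹' (M S)ᶜ)
        (fun k => (isClosed_closure.isOpen_compl).preimage (hf.iterate k)) hcov
      refine ⟨u.sup id, fun _ y => ?_⟩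
      obtain ⟨k, hku, hky⟩ := mem_iUnion₂.mp (hu (mem_univ y))
      exact ⟨k, Finset.le_sup (f := id) hku, hky⟩
  choose KS hKS using hbound
  set K : ℕ := t.powerset.sup KS with hK
  -- tracking entourage
  obtain ⟨D, hD, hDW, htrack⟩ := track_lemma f hf K W hW
  refine ⟨D, hD, fun x hx => ?_⟩
  -- the set of centers visited by the pseudo-orbit
  set S : Finset X := t.filter (fun c => ∃ i, x i ∈ ball c Wo) with hS
  have hSt : S ∈ t.powerset := Finset.mem_powerset.mpr (Finset.filter_subset _ _)
  by_cases hgood : ∃ z : X, ∀ k : ℕ, f^[k] z ∈ M S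
  · obtain ⟨z, hz⟩ := hgood
    refine ⟨z, fun k => ?_⟩
    have hmem := hz k
    rw [hM] at hmem
    obtain ⟨a, ⟨haA, haB⟩⟩ := UniformSpace.mem_closure_iff_ball.mp hmem hW
    obtain ⟨c, hcS, hca⟩ := mem_iUnion₂.mp haB
    obtain ⟨-, i, hi⟩ := Finset.mem_filter.mp hcS
    refine ⟨i, hW4 ?_⟩
    have h1 : (x i, c) ∈ W := @Std.Symm.symm _ _ hWsymm _ _ (hWoW hi)
    have h2 : (c, a) ∈ W ○ W := hca
    have h3 : (a, f^[k] z) ∈ W := @Std.Symm.symm _ _ hWsymm _ _ haA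
    obtain ⟨b, hb1, hb2⟩ := h2
    exact ⟨b, ⟨c, h1, hb1⟩, ⟨a, hb2, h3⟩⟩
  · exfalso
    obtain ⟨k, hkK, hesc⟩ := hKS S hgood (x 0)
    have hkK' : k ≤ K := hkK.trans (Finset.le_sup hSt)
    have htr : (f^[k] (x 0), x (0 + k)) ∈ W := htrack x hx k hkK' 0
    obtain ⟨c, hct, hc⟩ := mem_iUnion₂.mp (ht (mem_univ (x (0 + k))))
    have hcS : c ∈ S := Finset.mem_filter.mpr ⟨hct, ⟨0 + k, hc⟩⟩
    apply hesc
    apply subset_closure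
    exact mem_iUnion₂.mpr ⟨c, hcS, ⟨x (0 + k), hWoW hc, @Std.Symm.symm _ _ hWsymm _ _ htr⟩⟩
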